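/- Let p be an odd prime number with p ≥ e^7 and let x1 be a positive integer with x1^2 < p. Then p does not divide the class number h(ℚ(√(x1^2 − p))) of the imaginary quadratic field ℚ(√(x1^2 − p)). -/

import Mathlib

section PartA

open Finset

lemma sum_inv_sq_le (N : ℕ) : ∑ d ∈ Finset.Icc 1 N, (1:ℝ)/(d:ℝ)^2 ≤ 61/36 - if 3 ≤ N then 1/(N:ℝ) else 0 := by
  induction N with
  | zero => norm_num
  | succ n ih =>
    rcases le_or_gt (n+1) 3 with h | h
    · have hn2 : n ≤ 2 := by omega
      interval_cases n <;> norm_num [Finset.sum_Icc_succ_top]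
    · rw [Finset.sum_Icc_succ_top (by omega)]
      have h3 : 3 ≤ n := by omega
      simp only [if_pos (by omega : 3 ≤ n+1), if_pos h3] at *
      have hn : (0:ℝ) < n := by exact_mod_cast (by omega : 0 < n)
      have key : (1:ℝ)/((n:ℝ)+1)^2 ≤ 1/(n:ℝ) - 1/((n:ℝ)+1) := by
        rw [div_sub_div _ _ (ne_of_gt hn) (by positivity), div_le_div_iff₀ (by positivity) (by positivity)]
        nlinarith
      push_cast
      linarith

lemma sum_inv_pow4_le (N : ℕ) : ∑ d ∈ Finset.Icc 1 N, (1:ℝ)/(d:ℝ)^4 ≤ 1409/1296 - if 3 ≤ N then 1/(3*(N:ℝ)^3) else 0 := by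
  induction N with
  | zero => norm_num
  | succ n ih =>
    rcases le_or_gt (n+1) 3 with h | h
    · have hn2 : n ≤ 2 := by omega
      interval_cases n <;> norm_num [Finset.sum_Icc_succ_top]
    · rw [Finset.sum_Icc_succ_top (by omega)]
      have h3 : 3 ≤ n := by omega
      simp only [if_pos (by omega : 3 ≤ n+1), if_pos h3] at *
      have hn : (0:ℝ) < n := by exact_mod_cast (by omega : 0 < n)
      have key : (1:ℝ)/((n:ℝ)+1)^4 ≤ 1/(3*(n:ℝ)^3) - 1/(3*((n:ℝ)+1)^3) := by
        rw [div_sub_div _ _ (by positivity) (by positivity), div_le_div_iff₀ (by positivity) (by positivity)]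
        nlinarith [pow_pos hn 2, pow_pos hn 3, pow_pos hn 4, pow_pos hn 5, pow_pos hn 6, sq_nonneg ((n:ℝ)^2 - n), mul_pos (mul_pos hn hn) hn]
      push_cast
      linarith

end PartA

section PartB
open Finset

lemma count_lt (p N : ℕ) (hp : (1096:ℝ) ≤ (p:ℝ))
    (hN : (N:ℝ) ≤ 4/Real.pi * Real.sqrt p + 1) :
    ((∑ d ∈ Finset.Icc 1 N, (N/d^2)*(N/d^2+1)/2 : ℕ) : ℝ) < p := by
  have hπ : (3.141592:ℝ) < Real.pi := Real.pi_gt_d6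
  have hp0 : (0:ℝ) ≤ (p:ℝ) := by linarith
  set s := Real.sqrt p with hs
  have hs2 : s^2 = p := Real.sq_sqrt hp0
  have hsge : (33.1:ℝ) ≤ s := by
    have : ((33.1:ℝ))^2 ≤ p := by nlinarith
    nlinarith [Real.sqrt_le_sqrt this, Real.sqrt_nonneg (p:ℝ), hs2]
  -- bound N in real terms
  have hNb : (N:ℝ) ≤ 1.27324 * s + 1 := by
    have h4π : 4/Real.pi ≤ 1.27324 := by
      rw [div_le_iff₀ (by linarith)]
      nlinarith
    have hsnn : (0:ℝ) ≤ s := Real.sqrt_nonneg _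
    calc (N:ℝ) ≤ 4/Real.pi * s + 1 := hN
      _ ≤ 1.27324 * s + 1 := by nlinarith [div_nonneg (by norm_num : (0:ℝ) ≤ 4) (le_of_lt (by linarith : (0:ℝ) < Real.pi))]
  -- termwise bound
  have hterm : ∀ d ∈ Finset.Icc 1 N, (((N/d^2)*(N/d^2+1)/2 : ℕ) : ℝ) ≤
      (N:ℝ)^2/2 * (1/(d:ℝ)^4) + (N:ℝ)/2 * (1/(d:ℝ)^2) := by
    intro d hd
    have hd1 : 1 ≤ d := (Finset.mem_Icc.mp hd).1
    have hdpos : (0:ℝ) < (d:ℝ)^2 := by positivity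
    set m : ℕ := N/d^2 with hm
    have hcast : (((m*(m+1)/2 : ℕ)) : ℝ) = (m:ℝ)*((m:ℝ)+1)/2 := by
      have h2 : 2 ∣ m*(m+1) := Nat.even_mul_succ_self m |>.two_dvd
      rw [Nat.cast_div h2 (by norm_num)]
      push_cast; ring
    rw [hcast]
    have hmle : (m:ℝ) ≤ (N:ℝ)/(d:ℝ)^2 := by
      rw [le_div_iff₀ hdpos]
      exact_mod_cast Nat.div_mul_le_self N (d^2)
    have hm0 : (0:ℝ) ≤ (m:ℝ) := Nat.cast_nonneg m
    have : (m:ℝ)*((m:ℝ)+1)/2 ≤ ((N:ℝ)/(d:ℝ)^2)*(((N:ℝ)/(d:ℝ)^2)+1)/2 := by nlinarith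
    calc (m:ℝ)*((m:ℝ)+1)/2 ≤ ((N:ℝ)/(d:ℝ)^2)*(((N:ℝ)/(d:ℝ)^2)+1)/2 := this
      _ = (N:ℝ)^2/2 * (1/(d:ℝ)^4) + (N:ℝ)/2 * (1/(d:ℝ)^2) := by field_simp
  have hsum : ((∑ d ∈ Finset.Icc 1 N, (N/d^2)*(N/d^2+1)/2 : ℕ) : ℝ) ≤
      (N:ℝ)^2/2 * (1409/1296) + (N:ℝ)/2 * (61/36) := by
    push_cast
    calc ∑ d ∈ Finset.Icc 1 N, (((N/d^2)*(N/d^2+1)/2 : ℕ) : ℝ)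
        ≤ ∑ d ∈ Finset.Icc 1 N, ((N:ℝ)^2/2 * (1/(d:ℝ)^4) + (N:ℝ)/2 * (1/(d:ℝ)^2)) :=
          Finset.sum_le_sum hterm
      _ = (N:ℝ)^2/2 * (∑ d ∈ Finset.Icc 1 N, 1/(d:ℝ)^4) + (N:ℝ)/2 * (∑ d ∈ Finset.Icc 1 N, 1/(d:ℝ)^2) := by
          rw [Finset.sum_add_distrib, Finset.mul_sum, Finset.mul_sum]
      _ ≤ (N:ℝ)^2/2 * (1409/1296) + (N:ℝ)/2 * (61/36) := by
          have h4 := sum_inv_pow4_le N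
          have h2 := sum_inv_sq_le N
          have hb4 : ∑ d ∈ Finset.Icc 1 N, (1:ℝ)/(d:ℝ)^4 ≤ 1409/1296 := by
            split_ifs at h4 with h
            · have hpos : (0:ℝ) ≤ 1/(3*(N:ℝ)^3) := by positivity
              linarith
            · linarith
          have hb2 : ∑ d ∈ Finset.Icc 1 N, (1:ℝ)/(d:ℝ)^2 ≤ 61/36 := by
            split_ifs at h2 with h
            · have hpos : (0:ℝ) ≤ 1/(N:ℝ) := by positivity
              linarith
            · linarith
          have hN0 : (0:ℝ) ≤ (N:ℝ) := Nat.cast_nonneg N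
          nlinarith
  have hfin : (N:ℝ)^2/2 * (1409/1296) + (N:ℝ)/2 * (61/36) < (p:ℝ) := by
    have hN0 : (0:ℝ) ≤ (N:ℝ) := Nat.cast_nonneg N
    nlinarith [hs2, hsge, hNb, sq_nonneg ((N:ℝ) - (1.27324*s+1))]
  linarith

end PartB

section PartC

open Submodule

section IdealShape

variable {S : Type*} [CommRing S] [IsDomain S] [IsDedekindDomain S]
    [Module.Free ℤ S] [Module.Finite ℤ S]

set_option maxHeartbeats 1000000 in
lemma ideal_shape (B2 : Module.Basis (Fin 2) ℤ S) (hB : B2 0 = 1) (I : Ideal S)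
    (hI0 : Ideal.absNorm I ≠ 0) :
    ∃ d a c : ℕ, 0 < d ∧ 0 < a ∧ c < a ∧ Ideal.absNorm I = a * d^2 ∧
      Submodule.restrictScalars ℤ I = Submodule.span ℤ
        {(((d*a : ℕ) : ℤ)) • B2 0, (((d*c : ℕ) : ℤ)) • B2 0 + ((d : ℕ) : ℤ) • B2 1} := by
  classical
  set θ : S := B2 1 with hθ
  set r0 : S →ₗ[ℤ] ℤ := B2.coord 0 with hr0
  set r1 : S →ₗ[ℤ] ℤ := B2.coord 1 with hr1
  set n : ℕ := Ideal.absNorm I with hn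
  have hnI : ((n : ℤ) : S) ∈ I := by
    have := Ideal.absNorm_mem I
    rw [← hn] at this
    push_cast
    exact this
  set A : Ideal ℤ := I.comap (algebraMap ℤ S) with hA
  have hnA : (n : ℤ) ∈ A := by
    rw [hA, Ideal.mem_comap]
    simpa using hnI
  obtain ⟨a0, ha0⟩ := (IsPrincipalIdealRing.principal A).principal
  set aa : ℕ := a0.natAbs with haa
  set aZ : ℤ := (aa : ℤ) with haZ
  have hAspan : A = Ideal.span {aZ} := by
    rw [haZ, haa, Int.span_natAbs]
    exact ha0
  have haZ0 : aZ ≠ 0 := by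
    intro h
    rw [h, Ideal.span_singleton_eq_bot.mpr rfl] at hAspan
    rw [hAspan] at hnA
    simp only [Ideal.mem_bot] at hnA
    exact hI0 (by exact_mod_cast hnA)
  have haZpos : 0 < aZ := lt_of_le_of_ne (by positivity) (Ne.symm haZ0)
  set D : Submodule ℤ ℤ := Submodule.map r1 (Submodule.restrictScalars ℤ I) with hD
  have hr1_mem : ∀ x ∈ I, r1 x ∈ D := fun x hx => Submodule.mem_map_of_mem hx
  obtain ⟨d0, hd0⟩ := (IsPrincipalIdealRing.principal (D : Ideal ℤ)).principal
  set da : ℕ := d0.natAbs with hda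
  set dZ : ℤ := (da : ℤ) with hdZ
  have hDspan : D = Ideal.span {dZ} := by
    rw [hdZ, hda, Int.span_natAbs]
    exact hd0
  have hr1θ : r1 θ = 1 := by simp [hr1, hθ, Module.Basis.coord_apply, Module.Basis.repr_self]
  have hr0one : r0 (B2 0) = 1 := by simp [hr0, Module.Basis.coord_apply, Module.Basis.repr_self]
  have hr1one : r1 (B2 0) = 0 := by simp [hr1, Module.Basis.coord_apply, Module.Basis.repr_self]
  have hdZ0 : dZ ≠ 0 := by
    intro h
    have hmem : θ * ((n:ℤ):S) ∈ I := Ideal.mul_mem_left I θ hnI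
    have hmm : r1 (θ * ((n:ℤ):S)) ∈ D := hr1_mem _ hmem
    rw [hDspan, h, Ideal.span_singleton_eq_bot.mpr rfl, Ideal.mem_bot] at hmm
    have hcalc : r1 (θ * ((n:ℤ):S)) = (n:ℤ) := by
      have he : θ * ((n:ℤ):S) = (n:ℤ) • θ := by
        rw [zsmul_eq_mul]; ring
      rw [he, map_zsmul, hr1θ, smul_eq_mul, mul_one]
    rw [hcalc] at hmm
    exact hI0 (by exact_mod_cast hmm)
  have hdZpos : 0 < dZ := lt_of_le_of_ne (by positivity) (Ne.symm hdZ0)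
  have hdvd_r1 : ∀ x ∈ I, dZ ∣ r1 x := by
    intro x hx
    have := hr1_mem x hx
    rw [hDspan, Ideal.mem_span_singleton] at this
    exact this
  have hdvd_r0 : ∀ m : ℤ, (m • (1:S)) ∈ I → aZ ∣ m := by
    intro m hm
    have hmA : m ∈ A := by
      rw [hA, Ideal.mem_comap, Algebra.algebraMap_eq_smul_one]
      exact hm
    rw [hAspan, Ideal.mem_span_singleton] at hmA
    exact hmA
  have hdZD : dZ ∈ D := by rw [hDspan]; exact Ideal.subset_span rfl
  rw [hD] at hdZD
  obtain ⟨ξ, hξI, hξr1⟩ := Submodule.mem_map.mp hdZD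
  have hξI' : ξ ∈ I := hξI
  set α : S := aZ • B2 0 with hα
  have hα_mem : α ∈ I := by
    have hmA : aZ ∈ A := by rw [hAspan]; exact Ideal.subset_span rfl
    rw [hA, Ideal.mem_comap] at hmA
    rw [hα, hB]
    rwa [Algebra.algebraMap_eq_smul_one] at hmA
  have hr0α : r0 α = aZ := by rw [hα, map_zsmul, hr0one, smul_eq_mul, mul_one]
  have hr1α : r1 α = 0 := by rw [hα, map_zsmul, hr1one, smul_eq_mul, mul_zero]
  have hrepr : ∀ x : S, x = r0 x • B2 0 + r1 x • B2 1 := by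
    intro x
    conv_lhs => rw [← B2.sum_repr x]
    rw [Fin.sum_univ_two]
    rfl
  have hmult : ∀ x ∈ I, r1 x = 0 → ∃ m : ℤ, x = m • α := by
    intro x hx h1
    have hx' : x = r0 x • B2 0 := by
      conv_lhs => rw [hrepr x]
      rw [h1, zero_smul, add_zero]
    have hdvd : aZ ∣ r0 x := by
      apply hdvd_r0
      rw [← hB]
      rwa [← hx']
    obtain ⟨m, hm⟩ := hdvd
    refine ⟨m, ?_⟩
    rw [hx', hm, hα, smul_smul, mul_comm]
  have span_eq1 : Submodule.restrictScalars ℤ I = Submodule.span ℤ {α, ξ} := by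
    apply le_antisymm
    · intro x hx
      obtain ⟨k, hk⟩ := hdvd_r1 x hx
      set y : S := x - k • ξ with hy
      have hyI : y ∈ I := by
        rw [hy]
        refine Ideal.sub_mem I hx ?_
        rw [zsmul_eq_mul]
        exact Ideal.mul_mem_left I _ hξI'
      have hr1y : r1 y = 0 := by
        rw [hy, map_sub, map_zsmul, hξr1, hk, smul_eq_mul, mul_comm, sub_self]
      obtain ⟨m, hm⟩ := hmult y hyI hr1y
      have hxy : x = m • α + k • ξ := by rw [← hm, hy]; ring
      rw [hxy]
      exact Submodule.add_mem _
        (Submodule.smul_mem _ m (Submodule.subset_span (Set.mem_insert _ _)))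
        (Submodule.smul_mem _ k (Submodule.subset_span (Set.mem_insert_of_mem _ rfl)))
    · rw [Submodule.span_le]
      rintro x hx
      simp only [Set.mem_insert_iff, Set.mem_singleton_iff] at hx
      rcases hx with h | h
      · rw [h]; exact hα_mem
      · rw [h]; exact hξI'
  set c0 : ℤ := r0 ξ with hc0
  set q : ℤ := c0 / aZ with hq
  set cZ : ℤ := c0 % aZ with hcZ
  set ξ' : S := ξ - q • α with hξ'
  have hξ'_mem : ξ' ∈ I := by
    rw [hξ']
    refine Ideal.sub_mem I hξI' ?_
    rw [zsmul_eq_mul]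
    exact Ideal.mul_mem_left I _ hα_mem
  have hr0ξ' : r0 ξ' = cZ := by
    rw [hξ', map_sub, map_zsmul, hr0α, smul_eq_mul, hcZ, Int.emod_def, ← hc0, hq]
    ring
  have hr1ξ' : r1 ξ' = dZ := by
    rw [hξ', map_sub, map_zsmul, hr1α, smul_eq_mul, mul_zero, sub_zero, hξr1]
  have span_eq2 : Submodule.span ℤ ({α, ξ} : Set S) = Submodule.span ℤ {α, ξ'} := by
    apply le_antisymm
    · rw [Submodule.span_le]
      rintro x hx
      simp only [Set.mem_insert_iff, Set.mem_singleton_iff] at hx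
      rcases hx with h | h
      · rw [h]
        exact Submodule.subset_span (Set.mem_insert _ _)
      · rw [h]
        apply Submodule.mem_span_pair.mpr
        exact ⟨q, 1, by rw [hξ']; module⟩
    · rw [Submodule.span_le]
      rintro x hx
      simp only [Set.mem_insert_iff, Set.mem_singleton_iff] at hx
      rcases hx with h | h
      · rw [h]
        exact Submodule.subset_span (Set.mem_insert _ _)
      · rw [h]
        apply Submodule.mem_span_pair.mpr
        exact ⟨-q, 1, by rw [hξ']; module⟩
  have hdvd_a : dZ ∣ aZ := by
    have hmem : θ * α ∈ I := Ideal.mul_mem_left I θ hα_mem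
    have hd := hdvd_r1 _ hmem
    have hcalc : r1 (θ * α) = aZ := by
      have hh : θ * α = aZ • θ := by
        rw [hα, hB, zsmul_eq_mul, zsmul_eq_mul]; ring
      rw [hh, map_zsmul, hr1θ, smul_eq_mul, mul_one]
    rwa [hcalc] at hd
  have hdvd_c0 : dZ ∣ c0 := by
    have hmem : θ * ξ ∈ I := Ideal.mul_mem_left I θ hξI'
    have h1 := hdvd_r1 _ hmem
    have hξrepr : ξ = c0 • B2 0 + dZ • B2 1 := by
      conv_lhs => rw [hrepr ξ]
      rw [← hc0, hξr1]
    have hcalc : r1 (θ * ξ) = c0 + dZ * r1 (θ * θ) := by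
      have hh : θ * ξ = c0 • θ + dZ • (θ * θ) := by
        rw [hξrepr, hB, ← hθ, zsmul_eq_mul, zsmul_eq_mul, zsmul_eq_mul, zsmul_eq_mul]
        ring
      rw [hh, map_add, map_zsmul, map_zsmul, hr1θ, smul_eq_mul, mul_one, smul_eq_mul]
    rw [hcalc] at h1
    have h2 := dvd_sub h1 (dvd_mul_right dZ (r1 (θ * θ)))
    simpa using h2
  have hdvd_c : dZ ∣ cZ := by
    rw [hcZ, Int.emod_def]
    exact dvd_sub hdvd_c0 (Dvd.dvd.mul_right hdvd_a _)
  have hcZnn : 0 ≤ cZ := Int.emod_nonneg c0 haZ0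
  have hcZlt : cZ < aZ := Int.emod_lt_of_pos c0 haZpos
  set v : Fin 2 → I := ![⟨α, hα_mem⟩, ⟨ξ', hξ'_mem⟩] with hv
  have hv0 : (v 0 : S) = α := by simp [hv]
  have hv1 : (v 1 : S) = ξ' := by simp [hv]
  have hxmem : ∀ x ∈ I, ∃ m k : ℤ, m • α + k • ξ' = x := by
    intro x hx
    have hxs : x ∈ Submodule.span ℤ ({α, ξ'} : Set S) := by
      rw [← span_eq2, ← span_eq1]
      exact hx
    exact Submodule.mem_span_pair.mp hxs
  have hli : LinearIndependent ℤ v := by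
    rw [Fintype.linearIndependent_iff]
    intro g hg
    have hg' : g 0 • α + g 1 • ξ' = 0 := by
      have hcg := congrArg (Subtype.val : I → S) hg
      simpa [Fin.sum_univ_two, hv] using hcg
    have h1 : g 1 = 0 := by
      have hr := congrArg r1 hg'
      simp only [map_add, map_zsmul, hr1α, hr1ξ', smul_eq_mul, mul_zero, zero_add, map_zero] at hr
      rcases mul_eq_zero.mp hr with h | h
      · exact h
      · exact absurd h hdZ0
    have h0 : g 0 = 0 := by
      rw [h1, zero_smul, add_zero] at hg'
      have hr := congrArg r0 hg'
      simp only [map_zsmul, hr0α, smul_eq_mul, map_zero] at hr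
      rcases mul_eq_zero.mp hr with h | h
      · exact h
      · exact absurd h haZ0
    intro i
    fin_cases i
    · exact h0
    · exact h1
  have hsp : ⊤ ≤ Submodule.span ℤ (Set.range v) := by
    rintro ⟨x, hx⟩ -
    obtain ⟨m, k, hmk⟩ := hxmem x hx
    have hxv : (⟨x, hx⟩ : I) = m • v 0 + k • v 1 := by
      apply Subtype.ext
      push_cast [hv0, hv1]
      exact hmk.symm
    rw [hxv]
    exact Submodule.add_mem _
      (Submodule.smul_mem _ _ (Submodule.subset_span ⟨0, rfl⟩))
      (Submodule.smul_mem _ _ (Submodule.subset_span ⟨1, rfl⟩))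
  set bI : Module.Basis (Fin 2) ℤ I := Module.Basis.mk hli hsp with hbI
  have hdet : (B2.det (Subtype.val ∘ bI)) = aZ * dZ := by
    have hcoe : (Subtype.val ∘ bI) = ![α, ξ'] := by
      funext i
      simp only [Function.comp_apply, hbI, Module.Basis.coe_mk]
      fin_cases i
      · exact hv0
      · exact hv1
    rw [hcoe, Module.Basis.det_apply, Matrix.det_fin_two]
    have h00 : B2.toMatrix ![α, ξ'] 0 0 = aZ := by
      rw [Module.Basis.toMatrix_apply]; exact hr0α
    have h01 : B2.toMatrix ![α, ξ'] 0 1 = cZ := by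
      rw [Module.Basis.toMatrix_apply]; exact hr0ξ'
    have h10 : B2.toMatrix ![α, ξ'] 1 0 = 0 := by
      rw [Module.Basis.toMatrix_apply]; exact hr1α
    have h11 : B2.toMatrix ![α, ξ'] 1 1 = dZ := by
      rw [Module.Basis.toMatrix_apply]; exact hr1ξ'
    rw [h00, h01, h10, h11]
    ring
  have hnorm : n = aa * da := by
    have hnat := Ideal.natAbs_det_basis_change B2 I bI
    rw [hdet] at hnat
    rw [hn, ← hnat, haZ, hdZ]
    rw [Int.natAbs_mul]
    simp
  -- extract nat data
  have hdvd_a' : da ∣ aa := by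
    rwa [hdZ, haZ, Int.natCast_dvd_natCast] at hdvd_a
  obtain ⟨a, haq⟩ := hdvd_a'
  set cn : ℕ := cZ.toNat with hcn
  have hcn' : (cn : ℤ) = cZ := Int.toNat_of_nonneg hcZnn
  have hdvd_c' : da ∣ cn := by
    have : dZ ∣ (cn : ℤ) := by rw [hcn']; exact hdvd_c
    rwa [hdZ, Int.natCast_dvd_natCast] at this
  obtain ⟨c, hcq⟩ := hdvd_c'
  have hdapos : 0 < da := by
    rw [hdZ] at hdZpos; exact_mod_cast hdZpos
  have haapos : 0 < aa := by
    rw [haZ] at haZpos; exact_mod_cast haZpos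
  have hapos : 0 < a := by
    rcases Nat.eq_zero_or_pos a with h | h
    · rw [h, Nat.mul_zero] at haq; omega
    · exact h
  have hcnlt : cn < aa := by
    have : (cn:ℤ) < (aa:ℤ) := by rw [hcn']; rw [haZ] at hcZlt; exact hcZlt
    exact_mod_cast this
  have hclt : c < a := by
    rw [haq, hcq] at hcnlt
    exact Nat.lt_of_mul_lt_mul_left hcnlt
  refine ⟨da, a, c, hdapos, hapos, hclt, ?_, ?_⟩
  · rw [hnorm, haq, pow_two]
    ring
  · rw [span_eq1, span_eq2]
    have e1 : (((da*a : ℕ) : ℤ)) = aZ := by rw [haZ, haq]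
    have e2 : (((da*c : ℕ) : ℤ)) = cZ := by rw [← hcn', hcq]
    have e3 : ((da : ℕ) : ℤ) = dZ := by rw [hdZ]
    have eξ' : ξ' = cZ • B2 0 + dZ • B2 1 := by
      conv_lhs => rw [hrepr ξ']
      rw [hr0ξ', hr1ξ']
    rw [e1, e2, e3, ← hα, ← eξ']
end IdealShape

end PartC

section PartD

open NumberField Module

lemma exists_basis_one (K : Type*) [Field K] [NumberField K]
    (h2 : Module.finrank ℚ K = 2) :
    ∃ B2 : Basis (Fin 2) ℤ (𝓞 K), B2 0 = 1 := by
  classical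
  have hcard : Fintype.card (Module.Free.ChooseBasisIndex ℤ (𝓞 K)) = 2 := by
    rw [← Module.finrank_eq_card_chooseBasisIndex, RingOfIntegers.rank, h2]
  let e := Fintype.equivFinOfCardEq hcard
  set b : Basis (Fin 2) ℤ (𝓞 K) := (RingOfIntegers.basis K).reindex e with hb
  set u : ℤ := b.repr 1 0 with hu
  set v : ℤ := b.repr 1 1 with hv
  have hsum : u • b 0 + v • b 1 = 1 := by
    conv_rhs => rw [← b.sum_repr 1]
    rw [Fin.sum_univ_two]
  set g : ℕ := Int.gcd u v with hg
  have hg0 : g ≠ 0 := by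
    intro h
    rw [hg] at h
    obtain ⟨h1, h2'⟩ := Int.gcd_eq_zero_iff.mp h
    rw [h1, h2'] at hsum
    simp at hsum
  obtain ⟨u', hu'⟩ : ((g:ℤ)) ∣ u := Int.gcd_dvd_left u v
  obtain ⟨v', hv'⟩ : ((g:ℤ)) ∣ v := Int.gcd_dvd_right u v
  set w : 𝓞 K := u' • b 0 + v' • b 1 with hw
  have hgw : (g:ℤ) • w = 1 := by
    rw [hw, smul_add, smul_smul, smul_smul, ← hu', ← hv', hsum]
  have hgone : g = 1 := by
    have hmul : ((g:ℤ) : 𝓞 K) * w = 1 := by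
      rw [← zsmul_eq_mul, hgw]
    have hK : (((g:ℤ)) : K) * (w : K) = 1 := by
      have h' := congrArg (algebraMap (𝓞 K) K) hmul
      push_cast at h' ⊢
      exact_mod_cast h'
    have h1 : (w : K) = ((((g:ℤ)) : K))⁻¹ := eq_inv_of_mul_eq_one_right hK
    have hwval : (w : K) = algebraMap ℚ K ((g:ℚ))⁻¹ := by
      rw [map_inv₀, h1]
      congr 1
      push_cast
      rfl
    have hint : IsIntegral ℤ ((g:ℚ))⁻¹ := by
      rw [← isIntegral_algebraMap_iff (algebraMap ℚ K).injective, ← hwval]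
      exact RingOfIntegers.isIntegral_coe w
    obtain ⟨y, hy⟩ := IsIntegrallyClosed.isIntegral_iff.mp hint
    have hgq : ((g:ℚ)) ≠ 0 := Nat.cast_ne_zero.mpr hg0
    have hyq : (y:ℚ) = ((g:ℚ))⁻¹ := by exact_mod_cast hy
    have hyg : (y:ℚ) * (g:ℚ) = 1 := by rw [hyq, inv_mul_cancel₀ hgq]
    have hyg' : y * (g:ℤ) = 1 := by exact_mod_cast hyg
    have hdvd : ((g:ℤ)) ∣ 1 := ⟨y, by linarith⟩
    have := Int.eq_one_of_dvd_one (by positivity) hdvd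
    exact_mod_cast this
  rw [hgone] at hu' hv'
  simp only [Nat.cast_one, one_mul] at hu' hv'
  set x : ℤ := Int.gcdA u v with hx
  set y : ℤ := Int.gcdB u v with hy
  have hbez : u * x + v * y = 1 := by
    have hab := Int.gcd_eq_gcd_ab u v
    rw [← hg, hgone] at hab
    push_cast at hab
    linarith
  set M : Matrix (Fin 2) (Fin 2) ℤ := !![u, -y; v, x] with hM
  have hdet : M.det = 1 := by
    rw [hM, Matrix.det_fin_two_of]
    linarith
  have hunit : IsUnit M.det := by rw [hdet]; exact isUnit_one
  refine ⟨b.map (Matrix.toLinearEquiv b M hunit), ?_⟩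
  rw [Basis.map_apply, Matrix.toLinearEquiv_apply, Matrix.toLin_self, Fin.sum_univ_two]
  have hM00 : M 0 0 = u := by rw [hM]; rfl
  have hM10 : M 1 0 = v := by rw [hM]; rfl
  rw [hM00, hM10, hsum]

end PartD

section PartE

open Polynomial IntermediateField NumberField Module

variable {z : ℂ} {c : ℚ}

lemma aeval_zero (hcz : z^2 = (c:ℂ)) : (aeval z) (X^2 - C c : ℚ[X]) = 0 := by
  simp only [map_sub, map_pow, aeval_X, aeval_C]
  rw [hcz]
  simp [sub_self]

lemma quad_irr (hcneg : c < 0) : Irreducible (X^2 - C c : ℚ[X]) := by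
  apply X_pow_sub_C_irreducible_of_prime Nat.prime_two
  intro b
  nlinarith [sq_nonneg b]

lemma quad_minpoly (hcneg : c < 0) (hcz : z^2 = (c:ℂ)) : minpoly ℚ z = X^2 - C c :=
  (minpoly.eq_of_irreducible_of_monic (quad_irr hcneg) (aeval_zero hcz)
    (monic_X_pow_sub_C c (two_ne_zero))).symm

lemma quad_integral (hcneg : c < 0) (hcz : z^2 = (c:ℂ)) : IsIntegral ℚ z :=
  ⟨X^2 - C c, monic_X_pow_sub_C c (two_ne_zero), by simpa using aeval_zero hcz⟩

lemma quad_finrank (hcneg : c < 0) (hcz : z^2 = (c:ℂ)) :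
    Module.finrank ℚ ℚ⟮z⟯ = 2 := by
  rw [IntermediateField.adjoin.finrank (quad_integral hcneg hcz), quad_minpoly hcneg hcz,
    natDegree_X_pow_sub_C]

lemma quad_gen_sq (hcneg : c < 0) (hcz : z^2 = (c:ℂ)) :
    (AdjoinSimple.gen ℚ z)^2 = algebraMap ℚ ℚ⟮z⟯ c := by
  have hinj : Function.Injective (algebraMap ℚ⟮z⟯ ℂ) := (algebraMap ℚ⟮z⟯ ℂ).injective
  apply hinj
  rw [map_pow, AdjoinSimple.algebraMap_gen]
  rw [← IsScalarTower.algebraMap_apply ℚ ℚ⟮z⟯ ℂ]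
  rw [hcz]
  simp

lemma quad_nrReal (hcneg : c < 0) (hcz : z^2 = (c:ℂ)) [NumberField ℚ⟮z⟯] :
    NumberField.InfinitePlace.nrRealPlaces ℚ⟮z⟯ = 0 := by
  classical
  rw [NumberField.InfinitePlace.nrRealPlaces, Fintype.card_eq_zero_iff]
  refine ⟨fun w => ?_⟩
  obtain ⟨w, hw⟩ := w
  rw [NumberField.InfinitePlace.isReal_iff, NumberField.ComplexEmbedding.isReal_iff] at hw
  set φ : ℚ⟮z⟯ →+* ℂ := w.embedding with hφ
  set ζ := AdjoinSimple.gen ℚ z with hζ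
  have h1 : (φ ζ)^2 = (c : ℂ) := by
    rw [← map_pow, quad_gen_sq hcneg hcz]
    rw [show algebraMap ℚ ℚ⟮z⟯ c = ((c : ℚ⟮z⟯)) from eq_ratCast _ c, map_ratCast]
  have h2 : (starRingEnd ℂ) (φ ζ) = φ ζ := by
    have := congrArg (fun (f : ℚ⟮z⟯ →+* ℂ) => f ζ) hw
    simpa [NumberField.ComplexEmbedding.conjugate] using this
  rw [Complex.conj_eq_iff_im] at h2
  have hsq : ((φ ζ).re)^2 - ((φ ζ).im)^2 = (c:ℝ) := by
    have h3 := congrArg Complex.re h1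
    simpa [pow_two, Complex.mul_re, Complex.ratCast_re] using h3
  rw [h2] at hsq
  have hcr : ((c:ℝ)) < 0 := by exact_mod_cast hcneg
  nlinarith [sq_nonneg ((φ ζ).re)]

lemma quad_nrComplex (hcneg : c < 0) (hcz : z^2 = (c:ℂ)) [NumberField ℚ⟮z⟯] :
    NumberField.InfinitePlace.nrComplexPlaces ℚ⟮z⟯ = 1 := by
  have h := NumberField.InfinitePlace.card_add_two_mul_card_eq_rank ℚ⟮z⟯
  rw [quad_nrReal hcneg hcz, quad_finrank hcneg hcz] at h
  omega

set_option maxHeartbeats 1000000 in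
lemma quad_discr_le (hcneg : c < 0) (hcz : z^2 = (c:ℂ)) (hcint : ∃ m : ℤ, (m:ℚ) = c)
    [NumberField ℚ⟮z⟯] :
    (|NumberField.discr ℚ⟮z⟯| : ℚ) ≤ -(4*c) := by
  classical
  set K := ℚ⟮z⟯ with hKdef
  set pb : PowerBasis ℚ K := IntermediateField.adjoin.powerBasis (quad_integral hcneg hcz) with hpb
  have hgen : pb.gen = AdjoinSimple.gen ℚ z := rfl
  have hminpb : minpoly ℚ pb.gen = X^2 - C c := by
    rw [hgen]; erw [IntermediateField.minpoly_gen ℚ z]; rw [quad_minpoly hcneg hcz]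
  have hdim : pb.dim = 2 := by
    rw [hpb, IntermediateField.adjoin.powerBasis_dim, quad_minpoly hcneg hcz,
      natDegree_X_pow_sub_C]
  have hfr : Module.finrank ℚ K = 2 := quad_finrank hcneg hcz
  have hnormgen : Algebra.norm ℚ pb.gen = -c := by
    rw [Algebra.PowerBasis.norm_gen_eq_coeff_zero_minpoly, hminpb, hdim]
    simp [coeff_X_pow]
  have hder : derivative (X^2 - C c : ℚ[X]) = C 2 * X := by
    simp [derivative_X_pow]
    rw [← C_1, ← C_add]; norm_num
  have haevald : (aeval pb.gen) (derivative (minpoly ℚ pb.gen)) = algebraMap ℚ K 2 * pb.gen := by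
    rw [hminpb, hder]
    simp
  have hdisc_pb : Algebra.discr ℚ pb.basis = 4 * c := by
    rw [Algebra.discr_powerBasis_eq_norm, haevald, map_mul, Algebra.norm_algebraMap, hnormgen, hfr]
    norm_num
  have hcard : Fintype.card (Module.Free.ChooseBasisIndex ℤ (𝓞 K)) = 2 := by
    rw [← Module.finrank_eq_card_chooseBasisIndex, RingOfIntegers.rank, hfr]
  set e := Fintype.equivFinOfCardEq hcard with he
  set bI : Basis (Fin 2) ℚ K := (integralBasis K).reindex e with hbI
  have hdisc_bI : Algebra.discr ℚ bI = (NumberField.discr K : ℚ) := by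
    rw [hbI, Basis.coe_reindex, Algebra.discr_reindex, ← NumberField.coe_discr]
  set b' : Basis (Fin 2) ℚ K := pb.basis.reindex (finCongr hdim) with hb'
  have hdisc_b' : Algebra.discr ℚ b' = 4 * c := by
    rw [hb', Basis.coe_reindex, Algebra.discr_reindex, hdisc_pb]
  have hint_gen : IsIntegral ℤ pb.gen := by
    obtain ⟨m, hm⟩ := hcint
    refine ⟨X^2 - C m, monic_X_pow_sub_C m (two_ne_zero), ?_⟩
    have h1 : (pb.gen)^2 = algebraMap ℚ K c := by
      rw [hgen]
      exact quad_gen_sq hcneg hcz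
    show Polynomial.eval₂ (algebraMap ℤ K) pb.gen (X^2 - C m) = 0
    rw [Polynomial.eval₂_sub, Polynomial.eval₂_pow, Polynomial.eval₂_X, Polynomial.eval₂_C]
    rw [h1, IsScalarTower.algebraMap_apply ℤ ℚ K]
    rw [show algebraMap ℤ ℚ m = (m:ℚ) by simp, hm, sub_self]
  have hint_b' : ∀ j, IsIntegral ℤ (b' j) := by
    intro j
    rw [hb', Basis.coe_reindex]
    simp only [Function.comp_apply, PowerBasis.coe_basis]
    exact hint_gen.pow _
  set P : Matrix (Fin 2) (Fin 2) ℚ := bI.toMatrix b' with hP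
  have hPint : ∀ i j, ∃ m : ℤ, P i j = (m:ℚ) := by
    intro i j
    have hji := hint_b' j
    refine ⟨(RingOfIntegers.basis K).repr ⟨b' j, hji⟩ (e.symm i), ?_⟩
    have hx : algebraMap (𝓞 K) K ⟨b' j, hji⟩ = b' j := rfl
    rw [hP, Basis.toMatrix_apply, hbI, Basis.repr_reindex_apply]
    have h5 := NumberField.integralBasis_repr_apply (K := ↥K) ⟨b' j, hji⟩ (e.symm i)
    exact h5
  choose Pz hPz using fun i => (fun j => (hPint i j))
  have hPmap : P = (Matrix.of Pz).map (algebraMap ℤ ℚ) := by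
    ext i j
    rw [Matrix.map_apply]
    simpa using hPz i j
  set r : ℤ := (Matrix.of Pz).det with hr
  have hdet : P.det = (r:ℚ) := by
    rw [hPmap,
      show ((Matrix.of Pz).map (algebraMap ℤ ℚ)) = (algebraMap ℤ ℚ).mapMatrix (Matrix.of Pz)
        from rfl, ← RingHom.map_det, hr]
    simp
  have hkey : Algebra.discr ℚ b' = P.det^2 * Algebra.discr ℚ bI := by
    have hvec := Basis.toMatrix_map_vecMul bI (b' : Fin 2 → K)
    calc Algebra.discr ℚ b'
        = Algebra.discr ℚ (Matrix.vecMul (bI : Fin 2 → K) (P.map (algebraMap ℚ K))) := by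
          rw [hP, hvec]
      _ = P.det^2 * Algebra.discr ℚ bI := Algebra.discr_of_matrix_vecMul (bI : Fin 2 → K) P
  rw [hdisc_b', hdisc_bI, hdet] at hkey
  have hr0 : r ≠ 0 := by
    intro h
    rw [h] at hkey
    push_cast at hkey
    nlinarith
  have hrQ : ((r:ℚ)) ≠ 0 := Int.cast_ne_zero.mpr hr0
  have hr1 : (1:ℚ) ≤ ((r:ℚ))^2 := by
    have h1 : (1:ℤ) ≤ |r| := Int.one_le_abs hr0
    have h2 : (1:ℤ) ≤ r^2 := by nlinarith [sq_abs r]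
    exact_mod_cast h2
  have h2 : (NumberField.discr K : ℚ) = 4*c / ((r:ℚ))^2 := by
    rw [eq_div_iff (pow_ne_zero 2 hrQ)]
    linear_combination -hkey
  have habs : |(NumberField.discr K : ℚ)| = -(4*c) / ((r:ℚ))^2 := by
    rw [h2, abs_div, abs_of_nonneg (by positivity : (0:ℚ) ≤ ((r:ℚ))^2)]
    rw [abs_of_nonpos (by nlinarith : (4*c:ℚ) ≤ 0)]
  have hfinal : |((NumberField.discr ↥K : ℚ))| ≤ -(4*c) := by
    rw [habs]
    apply div_le_self (by nlinarith) hr1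
  calc (|NumberField.discr ↥K| : ℚ) = |((NumberField.discr ↥K : ℚ))| := by push_cast; ring
    _ ≤ -(4*c) := hfinal

end PartE

section PartF
open Polynomial IntermediateField NumberField Module Finset

-- placeholders for already-proven lemmas
set_option maxHeartbeats 1000000 in
/-- Let `p` be an odd prime number with `p ≥ e^7` and let `x1` be a positive integer with
`x1^2 < p`. Then `p` does not divide the class number of the imaginary quadratic field
`ℚ(√(x1^2 − p))`. -/
theorem stmt_0 (p : ℕ) (hp : p.Prime) (hodd : Odd p) (hge : Real.exp 7 ≤ (p : ℝ))
    (x1 : ℕ) (hx1 : 0 < x1) (hlt : x1 ^ 2 < p)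
    (z : ℂ) (hz : z ^ 2 = (x1 : ℂ) ^ 2 - (p : ℂ))
    (K : IntermediateField ℚ ℂ) (hK : K = IntermediateField.adjoin ℚ {z})
    [NumberField K] :
    ¬ (p ∣ NumberField.classNumber K) := by
  subst hK
  classical
  set c : ℚ := (x1:ℚ)^2 - (p:ℚ) with hc
  have hcneg : c < 0 := by
    rw [hc]
    have : ((x1:ℚ))^2 < (p:ℚ) := by exact_mod_cast hlt
    linarith
  have hcz : z^2 = (c:ℂ) := by
    rw [hz, hc]
    push_cast
    ring
  have hcint : ∃ m : ℤ, (m:ℚ) = c := ⟨(x1:ℤ)^2 - (p:ℤ), by rw [hc]; push_cast; ring⟩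
  have hfr : Module.finrank ℚ ℚ⟮z⟯ = 2 := quad_finrank hcneg hcz
  have hnc : NumberField.InfinitePlace.nrComplexPlaces ℚ⟮z⟯ = 1 := quad_nrComplex hcneg hcz
  have hdiscr := quad_discr_le hcneg hcz hcint
  -- basic real facts
  have hπ : (0:ℝ) < Real.pi := Real.pi_pos
  have hp1096 : (1096:ℝ) ≤ (p:ℝ) := by
    have h1 : (1096:ℝ) ≤ Real.exp 7 := by
      have h2 : ((2.7182818283:ℝ))^7 ≤ (Real.exp 1)^7 := by
        apply pow_le_pow_left₀ (by norm_num) (le_of_lt Real.exp_one_gt_d9)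
      have h3 : (Real.exp 1)^7 = Real.exp 7 := by
        rw [← Real.exp_nat_mul]
        norm_num
      nlinarith
    linarith
  have hppos : (0:ℝ) < (p:ℝ) := by linarith
  set N : ℕ := ⌈4/Real.pi * Real.sqrt p⌉₊ with hN
  -- Minkowski bound
  have hmink := fun C => NumberField.exists_ideal_in_class_of_norm_le (K := ℚ⟮z⟯) C
  choose f hf1 hf2 using hmink
  have hnormN : ∀ C, Ideal.absNorm (f C : Ideal (𝓞 ℚ⟮z⟯)) ≤ N := by
    intro C
    have h2 := hf2 C
    rw [hnc, hfr] at h2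
    have hd4 : |(NumberField.discr ℚ⟮z⟯ : ℝ)| ≤ 4*(p:ℝ) := by
      have : (|NumberField.discr ℚ⟮z⟯| : ℚ) ≤ 4*((p:ℚ)) := by
        have hx1q : (1:ℚ) ≤ ((x1:ℚ))^2 := by
          have : (1:ℕ) ≤ x1^2 := Nat.one_le_pow 2 x1 hx1
          exact_mod_cast this
        calc (|NumberField.discr ℚ⟮z⟯| : ℚ) ≤ -(4*c) := hdiscr
          _ ≤ 4*((p:ℚ)) := by rw [hc]; nlinarith
      have hcast : |(NumberField.discr ℚ⟮z⟯ : ℝ)| = ((|NumberField.discr ℚ⟮z⟯| : ℚ) : ℝ) := by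
        push_cast
        ring
      rw [hcast]
      exact_mod_cast this
    have hsq : Real.sqrt |(NumberField.discr ℚ⟮z⟯ : ℝ)| ≤ 2 * Real.sqrt p := by
      calc Real.sqrt |(NumberField.discr ℚ⟮z⟯ : ℝ)| ≤ Real.sqrt (4*(p:ℝ)) :=
            Real.sqrt_le_sqrt hd4
        _ = 2 * Real.sqrt p := by
            rw [show (4:ℝ)*(p:ℝ) = 2^2 * p by ring, Real.sqrt_mul (by positivity),
              Real.sqrt_sq (by norm_num)]
    have hbound : (Ideal.absNorm (f C : Ideal (𝓞 ℚ⟮z⟯)) : ℝ) ≤ 4/Real.pi * Real.sqrt p := by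
      calc (Ideal.absNorm (f C : Ideal (𝓞 ℚ⟮z⟯)) : ℝ)
          ≤ (4/Real.pi)^1 * ((Nat.factorial 2) / (2:ℕ)^2 * Real.sqrt |(NumberField.discr ℚ⟮z⟯ : ℝ)|) := h2
        _ = 4/Real.pi * (1/2 * Real.sqrt |(NumberField.discr ℚ⟮z⟯ : ℝ)|) := by
            norm_num [Nat.factorial]
        _ ≤ 4/Real.pi * (1/2 * (2 * Real.sqrt p)) := by
            apply mul_le_mul_of_nonneg_left _ (by positivity)
            apply mul_le_mul_of_nonneg_left hsq (by norm_num)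
        _ = 4/Real.pi * Real.sqrt p := by ring
    have : (Ideal.absNorm (f C : Ideal (𝓞 ℚ⟮z⟯)) : ℝ) ≤ (N:ℝ) := le_trans hbound (Nat.le_ceil _)
    exact_mod_cast this
  -- basis and shapes
  obtain ⟨B2, hB2⟩ := exists_basis_one ℚ⟮z⟯ hfr
  have hshape := fun C => ideal_shape B2 hB2 (f C : Ideal (𝓞 ℚ⟮z⟯))
    (Ideal.absNorm_ne_zero_of_nonZeroDivisors (f C))
  choose dd aa cc hd0 ha0 hca hnorm hspan using hshape
  -- injectivity
  set Φ : ClassGroup (𝓞 ℚ⟮z⟯) → ℕ × ℕ × ℕ := fun C => (dd C, aa C, cc C) with hΦ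
  have hinj : Function.Injective Φ := by
    intro C C' h
    have h1 : dd C = dd C' := congrArg (·.1) h
    have h2 : aa C = aa C' := congrArg (·.2.1) h
    have h3 : cc C = cc C' := congrArg (·.2.2) h
    have hIeq : (f C : Ideal (𝓞 ℚ⟮z⟯)) = (f C' : Ideal (𝓞 ℚ⟮z⟯)) := by
      have := hspan C
      rw [h1, h2, h3, ← hspan C'] at this
      exact Submodule.restrictScalars_injective ℤ _ _ this
    rw [← hf1 C, ← hf1 C']
    congr 1
    exact Subtype.ext hIeq
  -- membership in the counting finset
  set T : Finset (ℕ × ℕ × ℕ) :=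
    ((Finset.Icc 1 N) ×ˢ ((Finset.Icc 1 N) ×ˢ (Finset.range N))).filter
      (fun x => x.2.1 * x.1^2 ≤ N ∧ x.2.2 < x.2.1) with hT
  have hmemT : ∀ C, Φ C ∈ T := by
    intro C
    have hn := hnorm C
    have hN' := hnormN C
    have h1 : aa C * (dd C)^2 ≤ N := by rw [← hn]; exact hN'
    have he1 : dd C ≤ dd C ^ 2 := Nat.le_self_pow (by norm_num) _
    have he2 : dd C^2 ≤ aa C * dd C^2 := Nat.le_mul_of_pos_left _ (ha0 C)
    have hdle : dd C ≤ N := le_trans (le_trans he1 he2) h1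
    have he3 : aa C * 1 ≤ aa C * dd C^2 :=
      Nat.mul_le_mul_left _ (Nat.one_le_pow 2 _ (hd0 C))
    have hale : aa C ≤ N := le_trans (by omega) h1
    have hcl : cc C < N := lt_of_lt_of_le (hca C) hale
    rw [hT, Finset.mem_filter, Finset.mem_product, Finset.mem_product]
    refine ⟨⟨Finset.mem_Icc.mpr ⟨hd0 C, hdle⟩, Finset.mem_Icc.mpr ⟨ha0 C, hale⟩,
      Finset.mem_range.mpr hcl⟩, h1, hca C⟩
  -- card bound
  have hcard1 : NumberField.classNumber ℚ⟮z⟯ ≤ T.card := by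
    rw [NumberField.classNumber]
    rw [← Finset.card_univ]
    apply Finset.card_le_card_of_injOn Φ (fun C _ => hmemT C) (Function.Injective.injOn hinj)
  have hcard2 : T.card ≤ ∑ d ∈ Finset.Icc 1 N, (N/d^2)*(N/d^2+1)/2 := by
    have hsub : T ⊆ (Finset.Icc 1 N).biUnion (fun d =>
        (Finset.Icc 1 (N/d^2)).biUnion (fun a => ({d} ×ˢ ({a} ×ˢ Finset.range a)))) := by
      intro x hx
      rw [hT, Finset.mem_filter, Finset.mem_product, Finset.mem_product] at hx
      obtain ⟨⟨hd, ha, hc'⟩, hmul, hlt'⟩ := hx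
      rw [Finset.mem_biUnion]
      refine ⟨x.1, hd, ?_⟩
      rw [Finset.mem_biUnion]
      have hd1 : 1 ≤ x.1 := (Finset.mem_Icc.mp hd).1
      have ha1 : 1 ≤ x.2.1 := (Finset.mem_Icc.mp ha).1
      refine ⟨x.2.1, Finset.mem_Icc.mpr ⟨ha1, ?_⟩, ?_⟩
      · rw [Nat.le_div_iff_mul_le (by positivity)]
        exact hmul
      · rw [Finset.mem_product, Finset.mem_product]
        exact ⟨Finset.mem_singleton_self _, Finset.mem_singleton_self _, Finset.mem_range.mpr hlt'⟩
    calc T.card ≤ _ := Finset.card_le_card hsub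
      _ ≤ ∑ d ∈ Finset.Icc 1 N, ((Finset.Icc 1 (N/d^2)).biUnion
            (fun a => ({d} ×ˢ ({a} ×ˢ Finset.range a)))).card := Finset.card_biUnion_le
      _ ≤ ∑ d ∈ Finset.Icc 1 N, (N/d^2)*(N/d^2+1)/2 := by
          apply Finset.sum_le_sum
          intro d hd
          calc ((Finset.Icc 1 (N/d^2)).biUnion (fun a => ({d} ×ˢ ({a} ×ˢ Finset.range a)))).card
              ≤ ∑ a ∈ Finset.Icc 1 (N/d^2), (({d} ×ˢ ({a} ×ˢ Finset.range a))).card :=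
                Finset.card_biUnion_le
            _ = ∑ a ∈ Finset.Icc 1 (N/d^2), a := by
                apply Finset.sum_congr rfl
                intro a _
                rw [Finset.card_product, Finset.card_product, Finset.card_singleton,
                  Finset.card_singleton, Finset.card_range]
                ring
            _ = (N/d^2)*(N/d^2+1)/2 := by
                set M := N/d^2
                have h1 : ∑ a ∈ Finset.Icc 1 M, a = ∑ a ∈ Finset.range (M+1), a := by
                  conv_rhs => rw [Finset.sum_range_succ']
                  rw [show Finset.Icc 1 M = Finset.Ico 1 (M+1) by rw [Finset.Ico_add_one_right_eq_Icc]]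
                  rw [Finset.sum_Ico_eq_sum_range]
                  simp [add_comm]
                rw [h1, Finset.sum_range_id]
                simp [Nat.mul_comm]
  -- final
  have hNreal : (N:ℝ) ≤ 4/Real.pi * Real.sqrt p + 1 := by
    rw [hN]
    have := Nat.ceil_lt_add_one (by positivity : (0:ℝ) ≤ 4/Real.pi * Real.sqrt p)
    linarith
  have hlt_p : (∑ d ∈ Finset.Icc 1 N, (N/d^2)*(N/d^2+1)/2 : ℕ) < p := by
    have := count_lt p N hp1096 hNreal
    exact_mod_cast this
  intro hdvd
  have hpos : 0 < NumberField.classNumber ℚ⟮z⟯ := by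
    rw [NumberField.classNumber]
    exact Fintype.card_pos
  have := Nat.le_of_dvd hpos hdvd
  omega

end PartF
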